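/- Let S be the (s+1)×s matrix whose only nonzero entries are S_{j,j} = a_j for 1 ≤ j ≤ r−1, S_{r,r} = a_r, S_{r+1,r} = b_r, and S_{j+1,j} = b_j for r+1 ≤ j ≤ s, where all a_j, b_j > 0 and 1 ≤ r ≤ s. Then the operator norm of the Moore–Penrose pseudo-inverse of S equals max{ a_j^{−1} for 1 ≤ j ≤ r−1, b_j^{−1} for r+1 ≤ j ≤ s, (a_r² + b_r²)^{−1/2} }. -/

import Mathlib

lemma nat_partition (g : ℕ → ℝ) (r s : ℕ) (hr : r < s) :
    ∑ n ∈ Finset.range s, ((if n ≤ r then g n else 0) + (if r ≤ n then g (n+1) else 0)) =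
      ∑ n ∈ Finset.range (s+1), g n := by
  rw [Finset.sum_add_distrib]
  have e1 : ∑ n ∈ Finset.range s, (if n ≤ r then g n else 0)
      = ∑ n ∈ Finset.range (r+1), g n := by
    rw [← Finset.sum_filter]
    apply Finset.sum_congr _ (fun _ _ => rfl)
    ext n; simp only [Finset.mem_filter, Finset.mem_range]; omega
  have e2 : ∑ n ∈ Finset.range s, (if r ≤ n then g (n+1) else 0)
      = ∑ n ∈ Finset.Ico (r+1) (s+1), g n := by
    rw [← Finset.sum_filter]
    have hf : (Finset.range s).filter (fun n => r ≤ n) = Finset.Ico r s := by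
      ext n; simp only [Finset.mem_filter, Finset.mem_range, Finset.mem_Ico]; omega
    rw [hf, Finset.sum_Ico_eq_sum_range, Finset.sum_Ico_eq_sum_range]
    have hsr : s + 1 - (r + 1) = s - r := by omega
    rw [hsr]
    exact Finset.sum_congr rfl fun k _ => by congr 1; omega
  rw [e1, e2, Finset.range_eq_Ico, Finset.range_eq_Ico]
  exact Finset.sum_Ico_consecutive g (show 0 ≤ r + 1 by omega) (show r + 1 ≤ s + 1 by omega)


lemma side_bound (p x T : ℝ) (hp : 0 < p) (hT : p⁻¹ ≤ T) :
    ((p ^ 2)⁻¹ * (p * x)) ^ 2 ≤ T ^ 2 * x ^ 2 := by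
  have e : ((p ^ 2)⁻¹ * (p * x)) ^ 2 = (p⁻¹) ^ 2 * x ^ 2 := by
    field_simp
  rw [e]
  exact mul_le_mul_of_nonneg_right
    (pow_le_pow_left₀ (inv_nonneg.mpr hp.le) hT 2) (sq_nonneg x)

lemma middle_bound (p q x y T : ℝ) (hp : 0 < p) (hq : 0 < q)
    (hT : (p ^ 2 + q ^ 2)⁻¹ ≤ T) :
    ((p ^ 2 + q ^ 2)⁻¹ * (p * x + q * y)) ^ 2 ≤ T * (x ^ 2 + y ^ 2) := by
  have ht : 0 < p ^ 2 + q ^ 2 := by positivity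
  have hcs : (p * x + q * y) ^ 2 ≤ (p ^ 2 + q ^ 2) * (x ^ 2 + y ^ 2) := by
    nlinarith [sq_nonneg (p * y - q * x)]
  calc ((p ^ 2 + q ^ 2)⁻¹ * (p * x + q * y)) ^ 2
      = ((p ^ 2 + q ^ 2)⁻¹) ^ 2 * (p * x + q * y) ^ 2 := by ring
    _ ≤ ((p ^ 2 + q ^ 2)⁻¹) ^ 2 * ((p ^ 2 + q ^ 2) * (x ^ 2 + y ^ 2)) :=
        mul_le_mul_of_nonneg_left hcs (by positivity)
    _ = (p ^ 2 + q ^ 2)⁻¹ * (x ^ 2 + y ^ 2) := by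
        rw [sq, mul_assoc, ← mul_assoc (p ^ 2 + q ^ 2)⁻¹ (p ^ 2 + q ^ 2),
          inv_mul_cancel₀ ht.ne', one_mul]
    _ ≤ T * (x ^ 2 + y ^ 2) := mul_le_mul_of_nonneg_right hT (by positivity)

theorem pseudoinverse_norm (s : ℕ) (hs : 1 ≤ s) (r : Fin s)
    (a b : Fin s → ℝ) (ha : ∀ j, 0 < a j) (hb : ∀ j, 0 < b j)
    (S : Matrix (Fin (s + 1)) (Fin s) ℝ)
    (hS : ∀ i j, S i j =
      if i = Fin.castSucc j ∧ j ≤ r then a j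
      else if i = Fin.succ j ∧ r ≤ j then b j
      else 0)
    (G : Matrix (Fin s) (Fin (s + 1)) ℝ) (hG : G = (S.transpose * S)⁻¹ * S.transpose)
    (M : ℝ)
    (hM : M = sSup ({(Real.sqrt (a r ^ 2 + b r ^ 2))⁻¹} ∪
      {x : ℝ | ∃ j : Fin s, j < r ∧ x = (a j)⁻¹} ∪
      {x : ℝ | ∃ j : Fin s, r < j ∧ x = (b j)⁻¹})) :
    (∀ v : Fin (s + 1) → ℝ,
        ∑ j : Fin s, (G.mulVec v j) ^ 2 ≤ M ^ 2 * ∑ i : Fin (s + 1), (v i) ^ 2) ∧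
    (∃ v : Fin (s + 1) → ℝ, v ≠ 0 ∧
        ∑ j : Fin s, (G.mulVec v j) ^ 2 = M ^ 2 * ∑ i : Fin (s + 1), (v i) ^ 2) := by
  classical
  -- basic Fin facts
  have hne : ∀ x : Fin s, Fin.castSucc x ≠ Fin.succ x := fun x =>
    (Fin.castSucc_lt_succ : Fin.castSucc x < Fin.succ x).ne
  have hcs_succ : ∀ x y : Fin s, (Fin.castSucc x = Fin.succ y) ↔ (x : ℕ) = (y : ℕ) + 1 := by
    intro x y
    rw [Fin.ext_iff, Fin.coe_castSucc, Fin.val_succ]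
  -- the diagonal of Sᵀ S
  set d : Fin s → ℝ := fun j =>
    (if j ≤ r then a j ^ 2 else 0) + (if r ≤ j then b j ^ 2 else 0) with hd_def
  have hd : ∀ j, 0 < d j := by
    intro j
    have h1 : (0:ℝ) ≤ (if j ≤ r then a j ^ 2 else 0) := by split <;> positivity
    have h2 : (0:ℝ) ≤ (if r ≤ j then b j ^ 2 else 0) := by split <;> positivity
    rcases le_total j r with h | h
    · have e : (if j ≤ r then a j ^ 2 else 0) = a j ^ 2 := if_pos h
      have := pow_pos (ha j) 2
      simp only [hd_def]; rw [e]; linarith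
    · have e : (if r ≤ j then b j ^ 2 else 0) = b j ^ 2 := if_pos h
      have := pow_pos (hb j) 2
      simp only [hd_def]; rw [e]; linarith
  -- column sums
  have hcol : ∀ (j : Fin s) (v : Fin (s+1) → ℝ),
      ∑ i : Fin (s+1), S i j * v i =
        (if j ≤ r then a j * v (Fin.castSucc j) else 0) +
        (if r ≤ j then b j * v (Fin.succ j) else 0) := by
    intro j v
    have hterm : ∀ i, S i j * v i =
        (if i = Fin.castSucc j then (if j ≤ r then a j * v i else 0) else 0) +
        (if i = Fin.succ j then (if r ≤ j then b j * v i else 0) else 0) := by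
      intro i
      rw [hS]
      by_cases h1 : i = Fin.castSucc j
      · subst h1
        by_cases h3 : j ≤ r <;> by_cases h4 : r ≤ j <;>
          simp [hne j, h3, h4, mul_comm]
      · by_cases h2 : i = Fin.succ j
        · subst h2
          have h1' : Fin.succ j ≠ Fin.castSucc j := Ne.symm (hne j)
          by_cases h3 : j ≤ r <;> by_cases h4 : r ≤ j <;>
            simp [h1', h3, h4, mul_comm]
        · simp [h1, h2]
    rw [Finset.sum_congr rfl fun i _ => hterm i, Finset.sum_add_distrib,
      Finset.sum_ite_eq' Finset.univ (Fin.castSucc j),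
      Finset.sum_ite_eq' Finset.univ (Fin.succ j)]
    simp
  -- SᵀS is diagonal
  have hStS : S.transpose * S = Matrix.diagonal d := by
    ext j k
    rw [Matrix.mul_apply]
    simp only [Matrix.transpose_apply]
    rw [hcol j (fun i => S i k)]
    by_cases hjk : j = k
    · subst hjk
      rw [Matrix.diagonal_apply_eq]
      have e1 : S (Fin.castSucc j) j = if j ≤ r then a j else 0 := by
        rw [hS]; by_cases h3 : j ≤ r <;> simp [h3, hne j]
      have e2 : S (Fin.succ j) j = if r ≤ j then b j else 0 := by
        rw [hS]; by_cases h4 : r ≤ j <;> simp [h4, Ne.symm (hne j)]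
      rw [e1, e2]
      simp only [hd_def]
      by_cases h3 : j ≤ r <;> by_cases h4 : r ≤ j <;> simp [h3, h4] <;> ring
    · rw [Matrix.diagonal_apply_ne _ hjk]
      have e1 : j ≤ r → S (Fin.castSucc j) k = 0 := by
        intro h3
        rw [hS]
        rw [if_neg, if_neg]
        · rintro ⟨hh, hk⟩
          rw [hcs_succ] at hh
          have h1 : (j:ℕ) ≤ (r:ℕ) := h3
          have h2 : (r:ℕ) ≤ (k:ℕ) := hk
          omega
        · rintro ⟨hh, -⟩
          exact hjk (Fin.castSucc_injective _ hh)
      have e2 : r ≤ j → S (Fin.succ j) k = 0 := by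
        intro h4
        rw [hS]
        rw [if_neg, if_neg]
        · rintro ⟨hh, -⟩
          exact hjk (Fin.succ_injective _ hh)
        · rintro ⟨hh, hk⟩
          rw [eq_comm, hcs_succ] at hh
          have h1 : (r:ℕ) ≤ (j:ℕ) := h4
          have h2 : (k:ℕ) ≤ (r:ℕ) := hk
          omega
      by_cases h3 : j ≤ r <;> by_cases h4 : r ≤ j <;>
        simp [h3, h4, e1, e2]
  -- inverse of the diagonal
  have hinv : (Matrix.diagonal d)⁻¹ = Matrix.diagonal (fun j => (d j)⁻¹) := by
    apply Matrix.inv_eq_right_inv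
    rw [Matrix.diagonal_mul_diagonal]
    have : (fun j => d j * (d j)⁻¹) = fun _ => (1:ℝ) :=
      funext fun j => mul_inv_cancel₀ (hd j).ne'
    rw [this, Matrix.diagonal_one]
  -- formula for G.mulVec
  have hGv : ∀ (v : Fin (s+1) → ℝ) (j : Fin s),
      G.mulVec v j = (d j)⁻¹ *
        ((if j ≤ r then a j * v (Fin.castSucc j) else 0) +
         (if r ≤ j then b j * v (Fin.succ j) else 0)) := by
    intro v j
    rw [hG, ← Matrix.mulVec_mulVec, hStS, hinv, Matrix.mulVec_diagonal]
    congr 1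
    rw [← hcol j v]
    rw [Matrix.mulVec, dotProduct]
    simp [Matrix.transpose_apply]
  -- the finite set of candidate values
  set Fst : Finset ℝ := insert (Real.sqrt (a r ^ 2 + b r ^ 2))⁻¹
      (((Finset.univ.filter (· < r)).image fun j => (a j)⁻¹) ∪
       ((Finset.univ.filter (r < ·)).image fun j => (b j)⁻¹)) with hFst
  have hFne : Fst.Nonempty := ⟨_, Finset.mem_insert_self _ _⟩
  have hset : ({(Real.sqrt (a r ^ 2 + b r ^ 2))⁻¹} ∪
      {x : ℝ | ∃ j : Fin s, j < r ∧ x = (a j)⁻¹} ∪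
      {x : ℝ | ∃ j : Fin s, r < j ∧ x = (b j)⁻¹}) = (↑Fst : Set ℝ) := by
    ext x
    simp only [hFst, Finset.coe_insert, Set.mem_insert_iff, Finset.coe_union,
      Set.mem_union, Set.mem_setOf_eq, Set.mem_singleton_iff, Finset.coe_image,
      Set.mem_image, Finset.mem_coe, Finset.mem_filter, Finset.mem_univ, true_and,
      Finset.coe_filter]
    constructor
    · rintro ((h | ⟨j, hj, rfl⟩) | ⟨j, hj, rfl⟩)
      · exact Or.inl h
      · exact Or.inr (Or.inl ⟨j, hj, rfl⟩)
      · exact Or.inr (Or.inr ⟨j, hj, rfl⟩)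
    · rintro (h | (⟨j, hj, rfl⟩ | ⟨j, hj, rfl⟩))
      · exact Or.inl (Or.inl h)
      · exact Or.inl (Or.inr ⟨j, hj, rfl⟩)
      · exact Or.inr ⟨j, hj, rfl⟩
  have hMmax : M = Fst.max' hFne := by
    rw [hM, hset, hFne.csSup_eq_max']
  have hMmem : M ∈ Fst := hMmax ▸ Fst.max'_mem hFne
  have hMle : ∀ x ∈ Fst, x ≤ M := fun x hx => hMmax ▸ Fst.le_max' x hx
  have htpos : (0:ℝ) < a r ^ 2 + b r ^ 2 := add_pos (pow_pos (ha r) 2) (pow_pos (hb r) 2)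
  have hMr : (Real.sqrt (a r ^ 2 + b r ^ 2))⁻¹ ≤ M :=
    hMle _ (Finset.mem_insert_self _ _)
  have hMa : ∀ j : Fin s, j < r → (a j)⁻¹ ≤ M := by
    intro j hj
    exact hMle _ (Finset.mem_insert_of_mem (Finset.mem_union_left _
      (Finset.mem_image.mpr ⟨j, Finset.mem_filter.mpr ⟨Finset.mem_univ _, hj⟩, rfl⟩)))
  have hMb : ∀ j : Fin s, r < j → (b j)⁻¹ ≤ M := by
    intro j hj
    exact hMle _ (Finset.mem_insert_of_mem (Finset.mem_union_right _
      (Finset.mem_image.mpr ⟨j, Finset.mem_filter.mpr ⟨Finset.mem_univ _, hj⟩, rfl⟩)))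
  have hM0 : 0 < M :=
    lt_of_lt_of_le (inv_pos.mpr (Real.sqrt_pos.mpr htpos)) hMr
  have hMsq_r : (a r ^ 2 + b r ^ 2)⁻¹ ≤ M ^ 2 := by
    have h := pow_le_pow_left₀ (inv_nonneg.mpr (Real.sqrt_nonneg _)) hMr 2
    rwa [inv_pow, Real.sq_sqrt htpos.le] at h
  -- the partition of the squared norm
  have hpart : ∀ v : Fin (s+1) → ℝ,
      ∑ j : Fin s, ((if j ≤ r then v (Fin.castSucc j) ^ 2 else 0) +
        (if r ≤ j then v (Fin.succ j) ^ 2 else 0)) = ∑ i : Fin (s+1), v i ^ 2 := by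
    intro v
    set v' : ℕ → ℝ := fun n => if h : n < s + 1 then v ⟨n, h⟩ else 0 with hv'
    have hv'eq : ∀ i : Fin (s+1), v' (i : ℕ) = v i := by
      intro i; simp only [hv', i.isLt, dif_pos]
    have h1 : ∑ i : Fin (s+1), v i ^ 2 = ∑ n ∈ Finset.range (s+1), v' n ^ 2 := by
      rw [← Fin.sum_univ_eq_sum_range (fun n => v' n ^ 2) (s+1)]
      exact Finset.sum_congr rfl fun i _ => by rw [hv'eq]
    have h2 : ∑ j : Fin s, ((if j ≤ r then v (Fin.castSucc j) ^ 2 else 0) +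
        (if r ≤ j then v (Fin.succ j) ^ 2 else 0)) =
        ∑ n ∈ Finset.range s, ((if n ≤ (r:ℕ) then v' n ^ 2 else 0) +
          (if (r:ℕ) ≤ n then v' (n+1) ^ 2 else 0)) := by
      rw [← Fin.sum_univ_eq_sum_range (fun n => (if n ≤ (r:ℕ) then v' n ^ 2 else 0) +
          (if (r:ℕ) ≤ n then v' (n+1) ^ 2 else 0)) s]
      apply Finset.sum_congr rfl
      intro j _
      have hc : v' (j : ℕ) = v (Fin.castSucc j) := by
        rw [← hv'eq (Fin.castSucc j)]; rfl
      have hsu : v' ((j : ℕ) + 1) = v (Fin.succ j) := by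
        rw [← hv'eq (Fin.succ j)]; rfl
      rw [hc, hsu]
      simp only [Fin.le_def]
    rw [h1, h2]
    exact nat_partition (fun n => v' n ^ 2) (r : ℕ) s r.isLt
  constructor
  · -- the inequality
    intro v
    have key : ∀ j : Fin s, (G.mulVec v j) ^ 2 ≤ M ^ 2 *
        ((if j ≤ r then v (Fin.castSucc j) ^ 2 else 0) +
         (if r ≤ j then v (Fin.succ j) ^ 2 else 0)) := by
      intro j
      rw [hGv]
      rcases lt_trichotomy j r with h | h | h
      · have h1 : j ≤ r := h.le
        have h2 : ¬ r ≤ j := not_le.mpr h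
        have hdj : d j = a j ^ 2 := by simp only [hd_def]; rw [if_pos h1, if_neg h2, add_zero]
        rw [if_pos h1, if_neg h2, if_pos h1, if_neg h2, add_zero, add_zero, hdj]
        exact side_bound (a j) (v (Fin.castSucc j)) M (ha j) (hMa j h)
      · subst h
        have ht : 0 < a j ^ 2 + b j ^ 2 := htpos
        have hdj : d j = a j ^ 2 + b j ^ 2 := by
          simp only [hd_def]; rw [if_pos le_rfl, if_pos le_rfl]
        rw [if_pos le_rfl, if_pos le_rfl, if_pos le_rfl, if_pos le_rfl, hdj]
        exact middle_bound (a j) (b j) (v (Fin.castSucc j)) (v (Fin.succ j)) (M ^ 2)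
          (ha j) (hb j) hMsq_r
      · have h1 : ¬ j ≤ r := not_le.mpr h
        have h2 : r ≤ j := h.le
        have hdj : d j = b j ^ 2 := by simp only [hd_def]; rw [if_neg h1, if_pos h2, zero_add]
        rw [if_neg h1, if_pos h2, if_neg h1, if_pos h2, zero_add, zero_add, hdj]
        exact side_bound (b j) (v (Fin.succ j)) M (hb j) (hMb j h)
    calc ∑ j : Fin s, (G.mulVec v j) ^ 2
        ≤ ∑ j : Fin s, M ^ 2 * ((if j ≤ r then v (Fin.castSucc j) ^ 2 else 0) +
            (if r ≤ j then v (Fin.succ j) ^ 2 else 0)) :=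
          Finset.sum_le_sum fun j _ => key j
      _ = M ^ 2 * ∑ j : Fin s, ((if j ≤ r then v (Fin.castSucc j) ^ 2 else 0) +
            (if r ≤ j then v (Fin.succ j) ^ 2 else 0)) := by rw [Finset.mul_sum]
      _ = M ^ 2 * ∑ i : Fin (s+1), v i ^ 2 := by rw [hpart]
  · -- the equality case
    have sum_ind : ∀ (j : Fin s) (c : ℝ),
        ∑ k : Fin s, (if k = j then c else 0) ^ 2 = c ^ 2 := by
      intro j c
      have h1 : ∀ k : Fin s, (if k = j then c else 0) ^ 2 = if k = j then c ^ 2 else 0 :=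
        fun k => by split_ifs <;> simp
      rw [Finset.sum_congr rfl fun k _ => h1 k,
        Finset.sum_ite_eq' Finset.univ j (fun _ => c ^ 2)]
      simp
    rcases Finset.mem_insert.mp hMmem with hM' | hM'
    · -- M = (sqrt (a r ^ 2 + b r ^ 2))⁻¹
      set v : Fin (s+1) → ℝ :=
        fun i => if i = Fin.castSucc r then a r else if i = Fin.succ r then b r else 0 with hv
      refine ⟨v, ?_, ?_⟩
      · intro h0
        have h1 : v (Fin.castSucc r) = 0 := by rw [h0]; rfl
        simp only [hv, if_pos rfl] at h1
        exact (ha r).ne' h1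
      · have hGveq : ∀ k, G.mulVec v k = if k = r then 1 else 0 := by
          intro k
          rw [hGv]
          rcases lt_trichotomy k r with h | h | h
          · have e1 : v (Fin.castSucc k) = 0 := by
              simp only [hv]
              rw [if_neg, if_neg]
              · rw [hcs_succ]
                have := Fin.lt_def.mp h
                omega
              · exact fun hh => (ne_of_lt h) (Fin.castSucc_injective _ hh)
            rw [if_pos h.le, if_neg (not_le.mpr h), e1, mul_zero, add_zero, mul_zero,
              if_neg (ne_of_lt h)]
          · subst h
            have e1 : v (Fin.castSucc k) = a k := by simp only [hv, if_pos rfl]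
            have e2 : v (Fin.succ k) = b k := by
              simp only [hv]
              rw [if_neg (Ne.symm (hne k))]
              simp
            have hd_r : d k = a k ^ 2 + b k ^ 2 := by
              simp only [hd_def]; rw [if_pos le_rfl, if_pos le_rfl]
            rw [if_pos le_rfl, if_pos le_rfl, e1, e2, hd_r, if_pos rfl,
              show a k * a k + b k * b k = a k ^ 2 + b k ^ 2 from by ring,
              inv_mul_cancel₀ htpos.ne']
          · have e1 : v (Fin.succ k) = 0 := by
              simp only [hv]
              rw [if_neg, if_neg]
              · exact fun hh => (ne_of_gt h) (Fin.succ_injective _ hh)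
              · intro hh
                rw [eq_comm, hcs_succ] at hh
                have := Fin.lt_def.mp h
                omega
            rw [if_neg (not_le.mpr h), if_pos h.le, e1, mul_zero, zero_add, mul_zero,
              if_neg (ne_of_gt h)]
        have hsumL : ∑ k : Fin s, (G.mulVec v k) ^ 2 = 1 := by
          rw [Finset.sum_congr rfl fun k _ => by rw [hGveq k], sum_ind r 1, one_pow]
        have hsumR : ∑ i : Fin (s+1), v i ^ 2 = a r ^ 2 + b r ^ 2 := by
          have hterm : ∀ i, v i ^ 2 =
              (if i = Fin.castSucc r then a r ^ 2 else 0) +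
              (if i = Fin.succ r then b r ^ 2 else 0) := by
            intro i
            simp only [hv]
            by_cases h1 : i = Fin.castSucc r
            · subst h1
              rw [if_pos rfl, if_pos rfl, if_neg (hne r), add_zero]
            · by_cases h2 : i = Fin.succ r
              · subst h2
                rw [if_neg h1, if_pos rfl, if_neg h1, if_pos rfl, zero_add]
              · rw [if_neg h1, if_neg h2, if_neg h1, if_neg h2, add_zero]
                norm_num
          rw [Finset.sum_congr rfl fun i _ => hterm i, Finset.sum_add_distrib,
            Finset.sum_ite_eq' Finset.univ (Fin.castSucc r) (fun _ => a r ^ 2),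
            Finset.sum_ite_eq' Finset.univ (Fin.succ r) (fun _ => b r ^ 2)]
          simp
        have hMsq : M ^ 2 = (a r ^ 2 + b r ^ 2)⁻¹ := by
          rw [hM', inv_pow, Real.sq_sqrt htpos.le]
        rw [hsumL, hsumR, hMsq, inv_mul_cancel₀ htpos.ne']
    · rcases Finset.mem_union.mp hM' with himg | himg
      · -- M = (a j)⁻¹ for some j < r
        obtain ⟨j, hjmem, hje⟩ := Finset.mem_image.mp himg
        have hj : j < r := (Finset.mem_filter.mp hjmem).2
        set v : Fin (s+1) → ℝ := fun i => if i = Fin.castSucc j then 1 else 0 with hv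
        refine ⟨v, ?_, ?_⟩
        · intro h0
          have h1 : v (Fin.castSucc j) = 0 := by rw [h0]; rfl
          simp only [hv, if_pos rfl] at h1
          exact one_ne_zero h1
        · have hGveq : ∀ k, G.mulVec v k = if k = j then (a j)⁻¹ else 0 := by
            intro k
            rw [hGv]
            by_cases hk : k = j
            · subst hk
              have e1 : v (Fin.castSucc k) = 1 := by simp only [hv, if_pos rfl]
              have e2 : ¬ r ≤ k := not_le.mpr hj
              have hd_j : d k = a k ^ 2 := by
                simp only [hd_def]; rw [if_pos hj.le, if_neg e2, add_zero]
              rw [if_pos hj.le, if_neg e2, e1, hd_j, add_zero, if_pos rfl,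
                mul_one, sq, mul_inv, mul_assoc, inv_mul_cancel₀ (ha k).ne', mul_one]
            · have e1 : v (Fin.castSucc k) = 0 := by
                simp only [hv]
                exact if_neg fun hh => hk (Fin.castSucc_injective _ hh)
              have e2 : (if r ≤ k then b k * v (Fin.succ k) else 0) = 0 := by
                by_cases hrk : r ≤ k
                · have e3 : v (Fin.succ k) = 0 := by
                    simp only [hv]
                    rw [if_neg]
                    intro hh
                    rw [eq_comm, hcs_succ] at hh
                    have h4 := Fin.lt_def.mp hj
                    have h5 := Fin.le_def.mp hrk
                    omega
                  rw [if_pos hrk, e3, mul_zero]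
                · rw [if_neg hrk]
              rw [e2, e1, if_neg hk]
              by_cases hkr : k ≤ r
              · rw [if_pos hkr, mul_zero, add_zero, mul_zero]
              · rw [if_neg hkr, add_zero, mul_zero]
          have hsumL : ∑ k : Fin s, (G.mulVec v k) ^ 2 = ((a j)⁻¹) ^ 2 := by
            rw [Finset.sum_congr rfl fun k _ => by rw [hGveq k], sum_ind j ((a j)⁻¹)]
          have hsumR : ∑ i : Fin (s+1), v i ^ 2 = 1 := by
            have hterm : ∀ i : Fin (s+1), v i ^ 2 =
                if i = Fin.castSucc j then 1 else 0 := by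
              intro i
              simp only [hv]
              split_ifs <;> norm_num
            rw [Finset.sum_congr rfl fun i _ => hterm i,
              Finset.sum_ite_eq' Finset.univ (Fin.castSucc j) (fun _ => (1:ℝ))]
            simp
          rw [hsumL, hsumR, mul_one, hje]
      · -- M = (b j)⁻¹ for some j > r
        obtain ⟨j, hjmem, hje⟩ := Finset.mem_image.mp himg
        have hj : r < j := (Finset.mem_filter.mp hjmem).2
        set v : Fin (s+1) → ℝ := fun i => if i = Fin.succ j then 1 else 0 with hv
        refine ⟨v, ?_, ?_⟩
        · intro h0
          have h1 : v (Fin.succ j) = 0 := by rw [h0]; rfl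
          simp only [hv, if_pos rfl] at h1
          exact one_ne_zero h1
        · have hGveq : ∀ k, G.mulVec v k = if k = j then (b j)⁻¹ else 0 := by
            intro k
            rw [hGv]
            by_cases hk : k = j
            · subst hk
              have e1 : v (Fin.succ k) = 1 := by simp only [hv, if_pos rfl]
              have e2 : ¬ k ≤ r := not_le.mpr hj
              have hd_j : d k = b k ^ 2 := by
                simp only [hd_def]; rw [if_neg e2, if_pos hj.le, zero_add]
              rw [if_neg e2, if_pos hj.le, e1, hd_j, zero_add, if_pos rfl,
                mul_one, sq, mul_inv, mul_assoc, inv_mul_cancel₀ (hb k).ne', mul_one]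
            · have e1 : v (Fin.succ k) = 0 := by
                simp only [hv]
                exact if_neg fun hh => hk (Fin.succ_injective _ hh)
              have e2 : (if k ≤ r then a k * v (Fin.castSucc k) else 0) = 0 := by
                by_cases hkr : k ≤ r
                · have e3 : v (Fin.castSucc k) = 0 := by
                    simp only [hv]
                    rw [if_neg]
                    intro hh
                    rw [hcs_succ] at hh
                    have h4 := Fin.lt_def.mp hj
                    have h5 := Fin.le_def.mp hkr
                    omega
                  rw [if_pos hkr, e3, mul_zero]
                · rw [if_neg hkr]
              rw [e2, e1, if_neg hk]
              by_cases hrk : r ≤ k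
              · rw [if_pos hrk, mul_zero, zero_add, mul_zero]
              · rw [if_neg hrk]
                simp
          have hsumL : ∑ k : Fin s, (G.mulVec v k) ^ 2 = ((b j)⁻¹) ^ 2 := by
            rw [Finset.sum_congr rfl fun k _ => by rw [hGveq k], sum_ind j ((b j)⁻¹)]
          have hsumR : ∑ i : Fin (s+1), v i ^ 2 = 1 := by
            have hterm : ∀ i : Fin (s+1), v i ^ 2 =
                if i = Fin.succ j then 1 else 0 := by
              intro i
              simp only [hv]
              split_ifs <;> norm_num
            rw [Finset.sum_congr rfl fun i _ => hterm i,
              Finset.sum_ite_eq' Finset.univ (Fin.succ j) (fun _ => (1:ℝ))]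
            simp
          rw [hsumL, hsumR, mul_one, hje]
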